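/- Let 𝕂 = ℝ and let I be an antiunitary (conjugate-linear isometric involution-like) map on ℂ^n with I² = 1, and let g ∈ M_n(ℂ) be a self-adjoint unitary with g I = −I g. Then n is even, the +1-eigenspace of g has dimension n/2, and the algebra {A ∈ M_n(ℂ) : A I = I A, A g = g A} is *-isomorphic to M_{n/2}(ℂ) via A ↦ P⁺ A P⁺, where P⁺ = (1+g)/2. -/

import Mathlib

open Matrix

private lemma mat_ext_of_mulVec {n : ℕ} {A B : Matrix (Fin n) (Fin n) ℂ}
    (h : ∀ v, A.mulVec v = B.mulVec v) : A = B := by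
  ext i j; simpa using congrFun (h (Pi.single j 1)) i

private lemma star_mulVec' {n : ℕ} (A : Matrix (Fin n) (Fin n) ℂ) (v : Fin n → ℂ) :
    star (A.mulVec v) = (A.map star).mulVec (star v) := by
  ext i; simp [Matrix.mulVec, dotProduct, star_sum, mul_comm]

/-- for an antiunitary I on ℂ^n with I² = 1 and a self-adjoint unitary g
anticommuting with I: n is even, the +1-eigenspace of g has dimension n/2, and the real
*-algebra {A ∈ M_n(ℂ) : AI = IA, Ag = gA} is *-isomorphic to the corner
P⁺ M_n(ℂ) P⁺ ≅ M_{n/2}(ℂ) via the compression A ↦ P⁺ A P⁺, where P⁺ = (1+g)/2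
(the compression is injective, multiplicative, star-preserving, and onto the corner). -/
theorem stmt_9 (n : ℕ) (I : (Fin n → ℂ) → (Fin n → ℂ))
    (hIadd : ∀ ξ η, I (ξ + η) = I ξ + I η)
    (hIsmul : ∀ (c : ℂ) ξ, I (c • ξ) = star c • I ξ)
    (hIinner : ∀ ξ η, star (I ξ) ⬝ᵥ I η = star η ⬝ᵥ ξ)
    (hI2 : ∀ ξ, I (I ξ) = ξ)
    (g : Matrix (Fin n) (Fin n) ℂ) (hgsa : gᴴ = g) (hg2 : g * g = 1)
    (hanti : ∀ ξ, g.mulVec (I ξ) = - I (g.mulVec ξ)) :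
    Even n ∧
    Module.finrank ℂ (LinearMap.ker (Matrix.mulVecLin (g - 1))) = n / 2 ∧
    (let P := (2⁻¹ : ℂ) • ((1 : Matrix (Fin n) (Fin n) ℂ) + g)
     let S : Set (Matrix (Fin n) (Fin n) ℂ) :=
       {A | (∀ ξ, A.mulVec (I ξ) = I (A.mulVec ξ)) ∧ A * g = g * A}
     (∀ A ∈ S, ∀ A' ∈ S, P * A * P = P * A' * P → A = A') ∧
     (∀ A ∈ S, ∀ A' ∈ S, P * (A * A') * P = (P * A * P) * (P * A' * P)) ∧
     (∀ A ∈ S, P * Aᴴ * P = (P * A * P)ᴴ) ∧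
     (∀ B : Matrix (Fin n) (Fin n) ℂ, P * B * P = B → ∃ A ∈ S, P * A * P = B)) := by
  -- basic additive structure of I
  have hI0 : I 0 = 0 := by
    have h := hIadd 0 0
    rw [add_zero] at h
    have h2 : I 0 + I 0 = I 0 + 0 := by rw [add_zero]; exact h.symm
    exact add_left_cancel h2
  let Ih : (Fin n → ℂ) →+ (Fin n → ℂ) :=
    { toFun := I, map_zero' := hI0, map_add' := hIadd }
  have hIneg : ∀ v, I (-v) = -(I v) := fun v => map_neg Ih v
  have hIsum : ∀ (f : Fin n → (Fin n → ℂ)), I (∑ j, f j) = ∑ j, I (f j) :=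
    fun f => map_sum Ih f Finset.univ
  -- the matrix of I
  set M : Matrix (Fin n) (Fin n) ℂ :=
    Matrix.of (fun i j => I (Pi.single j 1) i) with hMdef
  have key : ∀ ξ, I ξ = M.mulVec (star ξ) := by
    intro ξ
    have hξ : ξ = ∑ j, ξ j • (Pi.single j 1 : Fin n → ℂ) := by
      ext i; simp [Pi.single_apply]
    calc I ξ = I (∑ j, ξ j • (Pi.single j 1 : Fin n → ℂ)) := by rw [← hξ]
      _ = ∑ j, star (ξ j) • I (Pi.single j 1) := by
          rw [hIsum fun j => ξ j • (Pi.single j 1 : Fin n → ℂ)]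
          exact Finset.sum_congr rfl fun j _ => hIsmul (ξ j) _
      _ = M.mulVec (star ξ) := by
          ext i
          simp [hMdef, Matrix.mulVec, dotProduct, mul_comm]
  have hMN : M * (M.map star) = 1 := by
    apply mat_ext_of_mulVec; intro v
    have h1 : M.mulVec (star (M.mulVec (star v))) = v := by
      rw [← key, ← key]; exact hI2 v
    have h2 : (M.map star).mulVec v = star (M.mulVec (star v)) := by
      rw [star_mulVec', star_star]
    rw [one_mulVec, ← mulVec_mulVec, h2, h1]
  have hdet : IsUnit M.det :=
    IsUnit.of_mul_eq_one _ (by rw [← det_mul, hMN, det_one])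
  have hmapg : g.map star = gᵀ := by
    ext i j
    have h := congrFun (congrFun hgsa j) i
    rw [conjTranspose_apply] at h
    simpa [Matrix.map_apply] using h
  have hgM : g * M = -(M * gᵀ) := by
    apply mat_ext_of_mulVec; intro v
    rw [← star_star v]
    set ξ := star v with hξdef
    have h := hanti ξ
    rw [key ξ, mulVec_mulVec] at h
    rw [key (g.mulVec ξ), star_mulVec'] at h
    rw [h, neg_mulVec, mulVec_mulVec, hmapg]
  -- the projections
  set P₀ : Matrix (Fin n) (Fin n) ℂ := (2⁻¹ : ℂ) • (1 + g) with hP0def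
  set Q : Matrix (Fin n) (Fin n) ℂ := (2⁻¹ : ℂ) • (1 - g) with hQdef
  have hPP : P₀ * P₀ = P₀ := by
    rw [hP0def, smul_mul_assoc, mul_smul_comm, smul_smul]
    have h1 : ((1 : Matrix (Fin n) (Fin n) ℂ) + g) * (1 + g) = (2:ℂ) • (1 + g) := by
      have h2 : ((1 : Matrix (Fin n) (Fin n) ℂ) + g) * (1 + g) = 1 + g + g + g * g := by
        noncomm_ring
      rw [h2, hg2, two_smul]; abel
    rw [h1, smul_smul]
    norm_num
  have hgP : g * P₀ = P₀ := by
    rw [hP0def, mul_smul_comm, mul_add, mul_one, hg2, add_comm]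
  have hPg : P₀ * g = P₀ := by
    rw [hP0def, smul_mul_assoc, add_mul, one_mul, hg2, add_comm]
  have hPQone : P₀ + Q = 1 := by
    rw [hP0def, hQdef, ← smul_add,
      show (1 : Matrix (Fin n) (Fin n) ℂ) + g + (1 - g)
          = (2:ℂ) • (1 : Matrix (Fin n) (Fin n) ℂ) from by rw [two_smul]; abel,
      smul_smul]
    norm_num
  have hPQ : P₀ * Q = 0 := by
    rw [hP0def, hQdef, smul_mul_assoc, mul_smul_comm, smul_smul]
    have h1 : ((1 : Matrix (Fin n) (Fin n) ℂ) + g) * (1 - g) = 1 - g * g := by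
      noncomm_ring
    rw [h1, hg2, sub_self, smul_zero]
  -- rank equalities
  have hQT : Qᵀ = (2⁻¹ : ℂ) • (1 - gᵀ) := by
    rw [hQdef, transpose_smul, transpose_sub, transpose_one]
  have hPMQ : P₀ * M = M * Qᵀ := by
    rw [hQT, hP0def, smul_mul_assoc, mul_smul_comm, add_mul, one_mul, hgM,
      mul_sub, mul_one, ← sub_eq_add_neg]
  have hrankPQ : P₀.rank = Q.rank := by
    rw [← rank_mul_eq_left_of_isUnit_det M P₀ hdet, hPMQ,
      rank_mul_eq_right_of_isUnit_det M Qᵀ hdet, rank_transpose]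
  have hkerP : LinearMap.ker P₀.mulVecLin = LinearMap.range Q.mulVecLin := by
    apply le_antisymm
    · intro v hv
      have hv' : P₀.mulVec v = 0 := hv
      refine ⟨v, ?_⟩
      have h : (P₀ + Q).mulVec v = v := by rw [hPQone, one_mulVec]
      rw [add_mulVec, hv', zero_add] at h
      exact h
    · rintro v ⟨w, rfl⟩
      show P₀.mulVec (Q.mulVec w) = 0
      rw [mulVec_mulVec, hPQ, zero_mulVec]
  have hkerg : LinearMap.ker (g - 1).mulVecLin = LinearMap.range P₀.mulVecLin := by
    apply le_antisymm
    · intro v hv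
      have hv' : (g - 1).mulVec v = 0 := hv
      rw [sub_mulVec, one_mulVec, sub_eq_zero] at hv'
      refine ⟨v, ?_⟩
      show P₀.mulVec v = v
      rw [hP0def, smul_mulVec, add_mulVec, one_mulVec, hv', ← two_smul ℂ v,
        smul_smul]
      norm_num
    · rintro v ⟨w, rfl⟩
      show (g - 1).mulVec (P₀.mulVec w) = 0
      rw [mulVec_mulVec, sub_mul, hgP, one_mul, sub_self, zero_mulVec]
  have hsum : P₀.rank + Q.rank = n := by
    have h := LinearMap.finrank_range_add_finrank_ker P₀.mulVecLin
    rw [hkerP, show Module.finrank ℂ (Fin n → ℂ) = n from by simp] at h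
    exact h
  have h2r : 2 * P₀.rank = n := by omega
  have hkerval : Module.finrank ℂ (LinearMap.ker (Matrix.mulVecLin (g - 1))) = P₀.rank := by
    rw [hkerg]; rfl
  refine ⟨⟨P₀.rank, by omega⟩, by omega, ?_⟩
  intro P S
  have hPd : P = P₀ := rfl
  -- commutation helpers
  have hAcomm : ∀ A : Matrix (Fin n) (Fin n) ℂ, A * g = g * A → A * P₀ = P₀ * A := by
    intro A hAg
    rw [hP0def, mul_smul_comm, smul_mul_assoc, mul_add, add_mul, mul_one, one_mul, hAg]
  have hcomp : ∀ A : Matrix (Fin n) (Fin n) ℂ, A * g = g * A → P₀ * A * P₀ = P₀ * A := by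
    intro A hAg
    rw [mul_assoc, hAcomm A hAg, ← mul_assoc, hPP]
  have hIPQ : ∀ ξ, I (P₀.mulVec (I ξ)) = Q.mulVec ξ := by
    intro ξ
    have h1 : P₀.mulVec (I ξ) = (2⁻¹ : ℂ) • (I ξ + -(I (g.mulVec ξ))) := by
      rw [hP0def, smul_mulVec, add_mulVec, one_mulVec, hanti ξ]
    rw [h1, hIsmul, show star ((2:ℂ)⁻¹) = (2⁻¹ : ℂ) from by simp, hIadd, hIneg,
      hI2, hI2, hQdef, smul_mulVec, sub_mulVec, one_mulVec, sub_eq_add_neg]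
  refine ⟨?_, ?_, ?_, ?_⟩
  · -- injectivity
    intro A hA A' hA' heq
    have hA2 : (∀ ξ, A.mulVec (I ξ) = I (A.mulVec ξ)) ∧ A * g = g * A := hA
    have hA'2 : (∀ ξ, A'.mulVec (I ξ) = I (A'.mulVec ξ)) ∧ A' * g = g * A' := hA'
    rw [hPd] at heq
    have hAPe : A * P₀ = A' * P₀ := by
      calc A * P₀ = A * (P₀ * P₀) := by rw [hPP]
        _ = (A * P₀) * P₀ := by rw [mul_assoc]
        _ = (P₀ * A) * P₀ := by rw [hAcomm A hA2.2]
        _ = (P₀ * A') * P₀ := heq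
        _ = (A' * P₀) * P₀ := by rw [hAcomm A' hA'2.2]
        _ = A' * (P₀ * P₀) := by rw [mul_assoc]
        _ = A' * P₀ := by rw [hPP]
    have hAQ : A * Q = A' * Q := by
      apply mat_ext_of_mulVec; intro v
      rw [← mulVec_mulVec, ← mulVec_mulVec, ← hIPQ v, hA2.1, hA'2.1,
        mulVec_mulVec, mulVec_mulVec, hAPe]
    calc A = A * (P₀ + Q) := by rw [hPQone, mul_one]
      _ = A * P₀ + A * Q := by rw [mul_add]
      _ = A' * P₀ + A' * Q := by rw [hAPe, hAQ]
      _ = A' * (P₀ + Q) := by rw [mul_add]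
      _ = A' := by rw [hPQone, mul_one]
  · -- multiplicativity
    intro A hA A' hA'
    have hAg : A * g = g * A := hA.2
    have hA'g : A' * g = g * A' := hA'.2
    rw [hPd]
    have hg12 : (A * A') * g = g * (A * A') := by
      rw [mul_assoc, hA'g, ← mul_assoc, hAg, mul_assoc]
    rw [hcomp _ hAg, hcomp _ hA'g, hcomp _ hg12]
    -- goal : P₀ * (A * A') = P₀ * A * (P₀ * A')
    rw [← hAcomm A' hA'g, ← mul_assoc, ← mul_assoc (P₀ * A) A' P₀,
      mul_assoc P₀ A A', hcomp _ hg12]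
  · -- star-preservation
    intro A hA
    have hAg : A * g = g * A := hA.2
    rw [hPd]
    have hPH : P₀ᴴ = P₀ := by
      rw [hP0def, conjTranspose_smul, conjTranspose_add, conjTranspose_one, hgsa]
      norm_num
    rw [conjTranspose_mul, conjTranspose_mul, hPH, mul_assoc]
  · -- surjectivity onto the corner
    intro B hB
    rw [hPd] at hB
    set C : Matrix (Fin n) (Fin n) ℂ := M * B.map star * M.map star with hCdef
    have hCvec : ∀ ξ, C.mulVec ξ = I (B.mulVec (I ξ)) := by
      intro ξ
      rw [key (B.mulVec (I ξ)), star_mulVec', key ξ, star_mulVec', star_star,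
        mulVec_mulVec, mulVec_mulVec, hCdef]
    have hgB : g * B = B := by
      conv_lhs => rw [← hB]
      rw [← mul_assoc, ← mul_assoc, hgP, hB]
    have hBg : B * g = B := by
      conv_lhs => rw [← hB]
      rw [mul_assoc, hPg, hB]
    have hgC : g * C = -C := by
      apply mat_ext_of_mulVec; intro ξ
      rw [neg_mulVec, ← mulVec_mulVec, hCvec, hanti, mulVec_mulVec, hgB, ← hCvec]
    have hCg : C * g = -C := by
      apply mat_ext_of_mulVec; intro ξ
      rw [neg_mulVec, ← mulVec_mulVec, hCvec]
      have hIg : I (g.mulVec ξ) = -(g.mulVec (I ξ)) := by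
        rw [hanti ξ, neg_neg]
      rw [hIg, mulVec_neg, mulVec_mulVec, hBg, hIneg, ← hCvec]
    have hPC : P₀ * C = 0 := by
      rw [hP0def, smul_mul_assoc, add_mul, one_mul, hgC, add_neg_cancel, smul_zero]
    refine ⟨B + C, ⟨?_, ?_⟩, ?_⟩
    · intro ξ
      rw [add_mulVec, add_mulVec, hCvec, hI2, hIadd, hCvec, hI2]
      exact add_comm _ _
    · rw [add_mul, mul_add, hBg, hgB, hCg, hgC]
    · show P * (B + C) * P = B
      rw [hPd, mul_add, add_mul, hB, hPC, zero_mul, add_zero]
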